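/- Let v ∈ ℤⁿ, M = ‖v‖_∞, and suppose indices i ≠ j satisfy: it is not the case that v_i = v_j = 0; it is not the case that one of |v_i|, |v_j| equals M and the other is 0; and it is not the case that both v_i and v_j are good (0 < |·| < M) with |v_i| = |v_j|. Then there exist an index pair (s,t) ∈ {(i,j),(j,i)} and a sign ε = ±1 such that the vector w obtained from v by replacing v_s with v_s + ε v_t satisfies w < v in the order given by comparing lexicographically (‖·‖_∞, number of maximal coordinates, n minus number of good coordinates, ‖·‖₁). -/
import Mathlib


/-- The sup-norm `‖x‖_∞` of `x ∈ ℤⁿ`. -/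
def normInf (n : ℕ) (x : Fin n → ℤ) : ℕ := Finset.univ.sup fun i => (x i).natAbs

/-- `m(x)`: the number of maximal coordinates. -/
def maxCount (n : ℕ) (x : Fin n → ℤ) : ℕ :=
  (Finset.univ.filter fun i => (x i).natAbs = normInf n x).card

/-- `g(x)`: the number of good coordinates. -/
def goodCount (n : ℕ) (x : Fin n → ℤ) : ℕ :=
  (Finset.univ.filter fun i => 0 < (x i).natAbs ∧ (x i).natAbs < normInf n x).card

/-- The `ℓ¹`-norm `‖x‖₁`. -/
def norm1 (n : ℕ) (x : Fin n → ℤ) : ℕ := ∑ i, (x i).natAbs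

/-- `x < y` iff `N(x) < N(y)` lexicographically, `N(x) = (‖x‖_∞, m(x), n − g(x), ‖x‖₁)`. -/
def vecLt (n : ℕ) (x y : Fin n → ℤ) : Prop :=
  normInf n x < normInf n y ∨ (normInf n x = normInf n y ∧
    (maxCount n x < maxCount n y ∨ (maxCount n x = maxCount n y ∧
      (n - goodCount n x < n - goodCount n y ∨ (n - goodCount n x = n - goodCount n y ∧
        norm1 n x < norm1 n y)))))

open Finset

lemma le_normInf (n : ℕ) (v : Fin n → ℤ) (k : Fin n) : (v k).natAbs ≤ normInf n v :=
  Finset.le_sup (f := fun i => (v i).natAbs) (mem_univ k)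

lemma exists_normInf (n : ℕ) (v : Fin n → ℤ) (h : 0 < normInf n v) :
    ∃ k, (v k).natAbs = normInf n v := by
  have hne : (univ : Finset (Fin n)).Nonempty := by
    by_contra hc
    rw [Finset.not_nonempty_iff_eq_empty] at hc
    rw [normInf, hc] at h
    simp at h
  obtain ⟨k, _, hk⟩ := Finset.exists_mem_eq_sup univ hne fun i => (v i).natAbs
  exact ⟨k, hk.symm⟩

lemma cancel (a b : ℤ) (h : b.natAbs ≤ a.natAbs) :
    ∃ ε : ℤ, (ε = 1 ∨ ε = -1) ∧ (a + ε * b).natAbs = a.natAbs - b.natAbs := by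
  rcases le_or_gt 0 a with ha | ha <;> rcases le_or_gt 0 b with hb | hb
  · exact ⟨-1, Or.inr rfl, by omega⟩
  · exact ⟨1, Or.inl rfl, by omega⟩
  · exact ⟨1, Or.inl rfl, by omega⟩
  · exact ⟨-1, Or.inr rfl, by omega⟩

lemma normInf_update_le (n : ℕ) (v : Fin n → ℤ) (s : Fin n) (c : ℤ)
    (h : c.natAbs ≤ normInf n v) :
    normInf n (Function.update v s c) ≤ normInf n v := by
  apply Finset.sup_le
  intro k _
  rcases eq_or_ne k s with rfl | hk
  · simpa using h
  · rw [Function.update_of_ne hk]; exact le_normInf n v k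

lemma normInf_update_eq (n : ℕ) (v : Fin n → ℤ) (s : Fin n) (c : ℤ)
    (h : c.natAbs ≤ normInf n v) (hk : ∃ k, k ≠ s ∧ (v k).natAbs = normInf n v) :
    normInf n (Function.update v s c) = normInf n v := by
  refine le_antisymm (normInf_update_le n v s c h) ?_
  obtain ⟨k, hks, hkv⟩ := hk
  calc normInf n v = (Function.update v s c k).natAbs := by
        rw [Function.update_of_ne hks, hkv]
    _ ≤ _ := le_normInf n _ k

lemma count_update_eq (n : ℕ) (v : Fin n → ℤ) (s : Fin n) (c : ℤ)
    (P : ℕ → Prop) [DecidablePred P] (hiff : P c.natAbs ↔ P (v s).natAbs) :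
    (univ.filter fun k => P ((Function.update v s c k).natAbs)).card
      = (univ.filter fun k => P ((v k).natAbs)).card := by
  congr 1
  apply Finset.filter_congr
  intro k _
  rcases eq_or_ne k s with rfl | hk
  · simpa using hiff
  · rw [Function.update_of_ne hk]

lemma maxCount_update_eq (n : ℕ) (v : Fin n → ℤ) (s : Fin n) (c : ℤ)
    (hn : normInf n (Function.update v s c) = normInf n v)
    (hiff : c.natAbs = normInf n v ↔ (v s).natAbs = normInf n v) :
    maxCount n (Function.update v s c) = maxCount n v := by
  unfold maxCount
  simp only [hn]
  exact count_update_eq n v s c (fun m => m = normInf n v) hiff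

lemma goodCount_update_eq (n : ℕ) (v : Fin n → ℤ) (s : Fin n) (c : ℤ)
    (hn : normInf n (Function.update v s c) = normInf n v)
    (hiff : (0 < c.natAbs ∧ c.natAbs < normInf n v) ↔
      (0 < (v s).natAbs ∧ (v s).natAbs < normInf n v)) :
    goodCount n (Function.update v s c) = goodCount n v := by
  unfold goodCount
  simp only [hn]
  exact count_update_eq n v s c (fun m => 0 < m ∧ m < normInf n v) hiff

lemma maxCount_update_lt (n : ℕ) (v : Fin n → ℤ) (s : Fin n) (c : ℤ)
    (hn : normInf n (Function.update v s c) = normInf n v)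
    (hc : c.natAbs < normInf n v) (hs : (v s).natAbs = normInf n v) :
    maxCount n (Function.update v s c) < maxCount n v := by
  unfold maxCount
  simp only [hn]
  apply Finset.card_lt_card
  rw [Finset.ssubset_def]
  constructor
  · intro k hk
    simp only [mem_filter, mem_univ, true_and] at hk ⊢
    rcases eq_or_ne k s with rfl | hks
    · rw [Function.update_self] at hk; omega
    · rwa [Function.update_of_ne hks] at hk
  · intro hsub
    have hmem : s ∈ univ.filter fun k => (v k).natAbs = normInf n v := by simp [hs]
    have := hsub hmem
    simp only [mem_filter, mem_univ, true_and, Function.update_self] at this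
    omega

lemma goodCount_update_gt (n : ℕ) (v : Fin n → ℤ) (s : Fin n) (c : ℤ)
    (hn : normInf n (Function.update v s c) = normInf n v)
    (hs : ¬ (0 < (v s).natAbs ∧ (v s).natAbs < normInf n v))
    (hc : 0 < c.natAbs ∧ c.natAbs < normInf n v) :
    n - goodCount n (Function.update v s c) < n - goodCount n v := by
  have h2 : goodCount n (Function.update v s c) ≤ n := by
    unfold goodCount
    calc _ ≤ (univ : Finset (Fin n)).card := Finset.card_filter_le _ _
      _ = n := by simp
  have h1 : goodCount n v < goodCount n (Function.update v s c) := by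
    unfold goodCount
    simp only [hn]
    apply Finset.card_lt_card
    rw [Finset.ssubset_def]
    constructor
    · intro k hk
      simp only [mem_filter, mem_univ, true_and] at hk ⊢
      rcases eq_or_ne k s with rfl | hks
      · exact absurd hk hs
      · rwa [Function.update_of_ne hks]
    · intro hsub
      have hmem : s ∈ univ.filter fun k =>
          0 < ((Function.update v s c) k).natAbs ∧
            ((Function.update v s c) k).natAbs < normInf n v := by
        simp only [mem_filter, mem_univ, true_and, Function.update_self]
        exact hc
      have := hsub hmem
      simp only [mem_filter, mem_univ, true_and] at this
      exact hs this
  omega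

lemma norm1_update_lt (n : ℕ) (v : Fin n → ℤ) (s : Fin n) (c : ℤ)
    (hc : c.natAbs < (v s).natAbs) :
    norm1 n (Function.update v s c) < norm1 n v := by
  unfold norm1
  have key : ∀ x : Fin n → ℤ,
      ∑ k, (x k).natAbs = (∑ k ∈ univ.erase s, (x k).natAbs) + (x s).natAbs :=
    fun x => (Finset.sum_erase_add univ _ (mem_univ s)).symm
  rw [key v, key (Function.update v s c)]
  have heq : ∑ k ∈ univ.erase s, ((Function.update v s c) k).natAbs
      = ∑ k ∈ univ.erase s, (v k).natAbs := by
    apply Finset.sum_congr rfl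
    intro k hk
    rw [Function.update_of_ne (Finset.ne_of_mem_erase hk)]
  rw [heq, Function.update_self]
  omega

lemma key (n : ℕ) (v : Fin n → ℤ) (M : ℕ) (hM : M = normInf n v)
    (i j : Fin n) (hij : i ≠ j)
    (h0 : ¬ (v i = 0 ∧ v j = 0))
    (h1 : ¬ (((v i).natAbs = M ∧ v j = 0) ∨ ((v j).natAbs = M ∧ v i = 0)))
    (h2 : ¬ ((0 < (v i).natAbs ∧ (v i).natAbs < M) ∧
      (0 < (v j).natAbs ∧ (v j).natAbs < M) ∧ (v i).natAbs = (v j).natAbs))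
    (hba : (v j).natAbs ≤ (v i).natAbs) :
    ∃ s t : Fin n, ((s = i ∧ t = j) ∨ (s = j ∧ t = i)) ∧
      ∃ ε : ℤ, (ε = 1 ∨ ε = -1) ∧
        vecLt n (Function.update v s (v s + ε * v t)) v := by
  have ha_le : (v i).natAbs ≤ M := hM ▸ le_normInf n v i
  by_cases hb0 : (v j).natAbs = 0
  · -- Case 1: v j = 0, v i good
    have hj0 : v j = 0 := Int.natAbs_eq_zero.mp hb0
    have hia : v i ≠ 0 := fun h => h0 ⟨h, hj0⟩
    have ha0 : 0 < (v i).natAbs := Int.natAbs_pos.mpr hia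
    have haM : (v i).natAbs ≠ M := fun h => h1 (Or.inl ⟨h, hj0⟩)
    have haltM : (v i).natAbs < M := lt_of_le_of_ne ha_le haM
    have hMpos : 0 < M := lt_of_le_of_lt (Nat.zero_le _) haltM
    refine ⟨j, i, Or.inr ⟨rfl, rfl⟩, 1, Or.inl rfl, ?_⟩
    set c : ℤ := v j + 1 * v i with hc
    have hcabs : c.natAbs = (v i).natAbs := by rw [hc, hj0]; ring_nf
    have hcle : c.natAbs ≤ normInf n v := by rw [hcabs, ← hM]; omega
    obtain ⟨k, hk⟩ := exists_normInf n v (by omega)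
    have hkj : k ≠ j := by
      intro h; rw [h, hb0] at hk; omega
    have hn : normInf n (Function.update v j c) = normInf n v :=
      normInf_update_eq n v j c hcle ⟨k, hkj, hk⟩
    have hmax : maxCount n (Function.update v j c) = maxCount n v :=
      maxCount_update_eq n v j c hn (by rw [hcabs, hb0, ← hM]; omega)
    have hgood : n - goodCount n (Function.update v j c) < n - goodCount n v :=
      goodCount_update_gt n v j c hn (by rw [hb0]; omega)
        (by rw [hcabs, ← hM]; omega)
    exact Or.inr ⟨hn, Or.inr ⟨hmax, Or.inl hgood⟩⟩
  · have hbpos : 0 < (v j).natAbs := Nat.pos_of_ne_zero hb0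
    obtain ⟨ε, hε, hcabs⟩ := cancel (v i) (v j) hba
    set c : ℤ := v i + ε * v j with hc
    by_cases haM : (v i).natAbs = M
    · -- Cases 3/4: |v i| = M
      refine ⟨i, j, Or.inl ⟨rfl, rfl⟩, ε, hε, ?_⟩
      have hcltM : c.natAbs < M := by omega
      have hle : normInf n (Function.update v i c) ≤ normInf n v :=
        normInf_update_le n v i c (by omega)
      rcases lt_or_eq_of_le hle with hlt | heq
      · exact Or.inl hlt
      · exact Or.inr ⟨heq, Or.inl
          (maxCount_update_lt n v i c heq (by omega) (by omega))⟩
    · -- Case 2: both good, |v j| < |v i| < M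
      have haltM : (v i).natAbs < M := lt_of_le_of_ne ha_le haM
      have hbltM : (v j).natAbs < M := lt_of_le_of_lt hba haltM
      have hne : (v i).natAbs ≠ (v j).natAbs := by
        intro h
        exact h2 ⟨⟨by omega, haltM⟩, ⟨hbpos, hbltM⟩, h⟩
      have hblta : (v j).natAbs < (v i).natAbs := lt_of_le_of_ne hba (fun h => hne h.symm)
      refine ⟨i, j, Or.inl ⟨rfl, rfl⟩, ε, hε, ?_⟩
      obtain ⟨k, hk⟩ := exists_normInf n v (by omega)
      have hki : k ≠ i := by
        intro h; rw [h] at hk; omega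
      have hn : normInf n (Function.update v i c) = normInf n v :=
        normInf_update_eq n v i c (by omega) ⟨k, hki, hk⟩
      have hmax : maxCount n (Function.update v i c) = maxCount n v :=
        maxCount_update_eq n v i c hn (by omega)
      have hgood : goodCount n (Function.update v i c) = goodCount n v :=
        goodCount_update_eq n v i c hn (by omega)
      have h1n : norm1 n (Function.update v i c) < norm1 n v :=
        norm1_update_lt n v i c (by omega)
      exact Or.inr ⟨hn, Or.inr ⟨hmax, Or.inr ⟨by rw [hgood], h1n⟩⟩⟩

/-- Let `v ∈ ℤⁿ`, `M = ‖v‖_∞`, and `i ≠ j` such that: not `v_i = v_j = 0`;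
not (one of `|v_i|, |v_j|` equals `M` and the other is `0`); and not (both `v_i, v_j` are
good with `|v_i| = |v_j|`). Then for some `(s,t) ∈ {(i,j),(j,i)}` and sign `ε = ±1`,
replacing `v_s` by `v_s + ε v_t` yields a vector `w < v` in the lexicographic `N`-order. -/
theorem stmt_15 (n : ℕ) (v : Fin n → ℤ) (M : ℕ) (hM : M = normInf n v)
    (i j : Fin n) (hij : i ≠ j)
    (h0 : ¬ (v i = 0 ∧ v j = 0))
    (h1 : ¬ (((v i).natAbs = M ∧ v j = 0) ∨ ((v j).natAbs = M ∧ v i = 0)))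
    (h2 : ¬ ((0 < (v i).natAbs ∧ (v i).natAbs < M) ∧
      (0 < (v j).natAbs ∧ (v j).natAbs < M) ∧ (v i).natAbs = (v j).natAbs)) :
    ∃ s t : Fin n, ((s = i ∧ t = j) ∨ (s = j ∧ t = i)) ∧
      ∃ ε : ℤ, (ε = 1 ∨ ε = -1) ∧
        vecLt n (Function.update v s (v s + ε * v t)) v := by
  rcases le_total ((v j).natAbs) ((v i).natAbs) with hba | hba
  · exact key n v M hM i j hij h0 h1 h2 hba
  · obtain ⟨s, t, hst, hrest⟩ := key n v M hM j i hij.symm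
      (fun h => h0 ⟨h.2, h.1⟩) (fun h => h1 h.symm)
      (fun h => h2 ⟨h.2.1, h.1, h.2.2.symm⟩) hba
    exact ⟨s, t, hst.symm, hrest⟩
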